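/- (Boundary Jumping) Assume the supports of P and N are partially disjoint: there exists a measurable set D̃_p with ∫_{D̃_p} P > 0 and ∫_{D̃_p} N = 0. Let 0 < α_l < α_h ≤ 1 and δ_l = α_l/(α_l+α_h), and define F(δ) = ∫_{𝔻_p(δ)} P(r) dr where 𝔻_p(δ) = {r : δ·Q_h(r) ≥ (1-δ)·Q_l(r)}. Then F(δ) = 0 for every δ < δ_l, while the right limit lim_{δ ↓ δ_l} F(δ) = ∫_{{r : N(r)=0}} P(r) dr > 0. Hence the measure F is discontinuous at δ = δ_l. -/
import Mathlib


open MeasureTheory Set Filter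

/-- Boundary Jumping: Assume partially disjoint supports (there is a
measurable `D̃_p` with `∫_{D̃_p} P > 0` and `∫_{D̃_p} N = 0`), and let `0 < α_l < α_h ≤ 1`,
`δ_l = α_l/(α_l+α_h)`, `F(δ) = ∫_{𝔻_p(δ)} P` where
`𝔻_p(δ) = {r : δ·Q_h(r) ≥ (1-δ)·Q_l(r)}`. Then `F(δ) = 0` for every `δ < δ_l`, while
`lim_{δ ↓ δ_l} F(δ) = ∫_{{N = 0}} P > 0`; hence `F` is discontinuous at `δ_l`. -/
theorem stmt_11 {m : ℕ} (N P : (Fin m → ℝ) → ℝ)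
    (hNmeas : Measurable N) (hPmeas : Measurable P)
    (hNnonneg : ∀ r, 0 ≤ N r) (hPnonneg : ∀ r, 0 ≤ P r)
    (hNint : ∫ r, N r = 1) (hPint : ∫ r, P r = 1)
    (αl αh : ℝ) (hαl : 0 < αl) (hlh : αl < αh) (hαh : αh ≤ 1)
    (Ql Qh : (Fin m → ℝ) → ℝ)
    (hQl : ∀ r, Ql r = αl * P r + (1 - αl) * N r)
    (hQh : ∀ r, Qh r = αh * P r + (1 - αh) * N r)
    (Dtilde : Set (Fin m → ℝ)) (hDtilde : MeasurableSet Dtilde)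
    (hDP : 0 < ∫ r in Dtilde, P r) (hDN : ∫ r in Dtilde, N r = 0)
    (F : ℝ → ℝ)
    (hF : ∀ δ, F δ = ∫ r in {r : Fin m → ℝ | δ * Qh r ≥ (1 - δ) * Ql r}, P r) :
    (∀ δ : ℝ, δ < αl / (αl + αh) → F δ = 0)
    ∧ Tendsto F (nhdsWithin (αl / (αl + αh)) (Set.Ioi (αl / (αl + αh))))
        (nhds (∫ r in {r : Fin m → ℝ | N r = 0}, P r))
    ∧ 0 < ∫ r in {r : Fin m → ℝ | N r = 0}, P r := by
  have hsum : 0 < αl + αh := by linarith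
  have hαl1 : αl < 1 := lt_of_lt_of_le hlh hαh
  have h2 : 0 < 2 - αl - αh := by linarith
  set δl : ℝ := αl / (αl + αh) with hδl
  have hδlmul : δl * (αl + αh) = αl := div_mul_cancel₀ _ (ne_of_gt hsum)
  have hPint' : Integrable P := by
    by_contra h
    rw [integral_undef h] at hPint; norm_num at hPint
  have hNint' : Integrable N := by
    by_contra h
    rw [integral_undef h] at hNint; norm_num at hNint
  -- key algebraic identity
  have key : ∀ (δ : ℝ) r, δ * Qh r - (1 - δ) * Ql r
      = (δ * (αl + αh) - αl) * P r + (δ * (2 - αl - αh) - (1 - αl)) * N r := by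
    intro δ r; rw [hQl, hQh]; ring
  set S : ℝ → Set (Fin m → ℝ) := fun δ => {r | δ * Qh r ≥ (1 - δ) * Ql r} with hSdef
  have hmemS : ∀ (δ : ℝ) r, r ∈ S δ ↔
      0 ≤ (δ * (αl + αh) - αl) * P r + (δ * (2 - αl - αh) - (1 - αl)) * N r := by
    intro δ r
    constructor
    · intro h; rw [← key]; exact sub_nonneg.mpr h
    · intro h
      exact sub_nonneg.mp (by rw [key]; exact h)
  have hQlmeas : Measurable Ql := by
    have : Ql = fun r => αl * P r + (1 - αl) * N r := funext hQl
    rw [this]; exact (measurable_const.mul hPmeas).add (measurable_const.mul hNmeas)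
  have hQhmeas : Measurable Qh := by
    have : Qh = fun r => αh * P r + (1 - αh) * N r := funext hQh
    rw [this]; exact (measurable_const.mul hPmeas).add (measurable_const.mul hNmeas)
  have hSmeas : ∀ δ : ℝ, MeasurableSet (S δ) := fun δ =>
    measurableSet_le (measurable_const.mul hQlmeas) (measurable_const.mul hQhmeas)
  have hQlnn : ∀ r, 0 ≤ Ql r := by
    intro r; rw [hQl]
    have := hPnonneg r; have := hNnonneg r; nlinarith
  have hQhnn : ∀ r, 0 ≤ Qh r := by
    intro r; rw [hQh]
    have := hPnonneg r; have := hNnonneg r; nlinarith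
  -- S is monotone in δ
  have hSmono : ∀ ⦃δ δ' : ℝ⦄, δ ≤ δ' → S δ ⊆ S δ' := by
    intro δ δ' hδδ r hr
    simp only [hSdef, mem_setOf_eq, ge_iff_le] at hr ⊢
    have h1 := mul_nonneg (sub_nonneg.2 hδδ) (hQlnn r)
    have h2 := mul_nonneg (sub_nonneg.2 hδδ) (hQhnn r)
    nlinarith
  -- F is monotone
  have hFmono : ∀ ⦃δ δ' : ℝ⦄, δ ≤ δ' → F δ ≤ F δ' := by
    intro δ δ' hδδ
    rw [hF, hF]
    exact setIntegral_mono_set hPint'.integrableOn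
      (Eventually.of_forall fun r => hPnonneg r)
      (HasSubset.Subset.eventuallyLE (hSmono hδδ))
  have hNzm : MeasurableSet {r : Fin m → ℝ | N r = 0} :=
    hNmeas (measurableSet_singleton 0)
  set L : ℝ := ∫ r in {r : Fin m → ℝ | N r = 0}, P r with hL
  -- {N = 0} ⊆ S δ for δ > δl
  have hsub : ∀ ⦃δ : ℝ⦄, δl < δ → {r : Fin m → ℝ | N r = 0} ⊆ S δ := by
    intro δ hδ r hr
    have hNr : N r = 0 := hr
    rw [hmemS, hNr]
    have hcP : 0 ≤ δ * (αl + αh) - αl := by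
      have := (div_lt_iff₀ hsum).mp hδ; linarith [mul_comm δ (αl + αh)]
    nlinarith [hPnonneg r]
  -- lower bound for δ > δl
  have hlow : ∀ ⦃δ : ℝ⦄, δl < δ → L ≤ F δ := by
    intro δ hδ
    rw [hF]
    exact setIntegral_mono_set hPint'.integrableOn
      (Eventually.of_forall fun r => hPnonneg r)
      (HasSubset.Subset.eventuallyLE (hsub hδ))
  -- Part 3: positivity
  have hpos : 0 < L := by
    have hInt : IntegrableOn N Dtilde := hNint'.integrableOn
    have h0 : N =ᵐ[volume.restrict Dtilde] 0 :=
      (integral_eq_zero_iff_of_nonneg hNnonneg hInt).mp hDN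
    have h0' : ∀ᵐ r, r ∈ Dtilde → N r = 0 := (ae_restrict_iff' hDtilde).mp h0
    have hle : Dtilde ≤ᵐ[volume] {r : Fin m → ℝ | N r = 0} := h0'.mono fun r hr => hr
    have := setIntegral_mono_set hPint'.integrableOn
      (Eventually.of_forall fun r => hPnonneg r) hle
    exact lt_of_lt_of_le hDP this
  -- Part 1
  have part1 : ∀ δ : ℝ, δ < δl → F δ = 0 := by
    intro δ hδ
    have hcP : δ * (αl + αh) - αl < 0 := by
      have := (lt_div_iff₀ hsum).mp hδ; linarith
    have hcN : δ * (2 - αl - αh) - (1 - αl) < 0 := by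
      have hδl1 : δ < 1 := by
        calc δ < δl := hδ
        _ < 1 := by rw [hδl, div_lt_one hsum]; linarith
      have h3 : δ * (2 - αl - αh) ≤ δl * (2 - αl - αh) :=
        mul_le_mul_of_nonneg_right hδ.le h2.le
      have h4 : δl * (2 - αl - αh) - (1 - αl) < 0 := by
        rw [div_mul_eq_mul_div, sub_neg, div_lt_iff₀ hsum]; nlinarith
      linarith
    rw [hF]
    apply setIntegral_eq_zero_of_forall_eq_zero
    intro r hr
    rw [hmemS] at hr
    have hP := hPnonneg r; have hN := hNnonneg r
    nlinarith
  refine ⟨part1, ?_, hpos⟩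
  -- sequential limit
  set δseq : ℕ → ℝ := fun n => δl + 1 / (n + 1) with hδseq
  have hδseqgt : ∀ n, δl < δseq n := by
    intro n; simp only [hδseq]
    have : (0 : ℝ) < 1 / (n + 1) := by positivity
    linarith
  have hδseqtend : Tendsto δseq atTop (nhds δl) := by
    have h1 : Tendsto (fun n : ℕ => 1 / ((n : ℝ) + 1)) atTop (nhds 0) :=
      tendsto_one_div_add_atTop_nhds_zero_nat
    have := h1.const_add δl
    simpa only [hδseq, one_div, add_zero] using this
  have hδseqanti : Antitone δseq := by
    intro i j hij
    simp only [hδseq]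
    have : (i : ℝ) + 1 ≤ (j : ℝ) + 1 := by exact_mod_cast by omega
    have h1 : 1 / ((j : ℝ) + 1) ≤ 1 / ((i : ℝ) + 1) :=
      one_div_le_one_div_of_le (by positivity) this
    linarith
  have hanti : Antitone (fun n => S (δseq n)) := fun i j hij => hSmono (hδseqanti hij)
  have hiInter : (⋂ n, S (δseq n)) = {r : Fin m → ℝ | N r = 0} := by
    apply Set.Subset.antisymm
    · intro r hr
      simp only [mem_iInter] at hr
      have hn : ∀ n, 0 ≤ (δseq n * (αl + αh) - αl) * P r
          + (δseq n * (2 - αl - αh) - (1 - αl)) * N r := fun n => (hmemS _ r).mp (hr n)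
      have hcont : Continuous (fun δ : ℝ => (δ * (αl + αh) - αl) * P r
          + (δ * (2 - αl - αh) - (1 - αl)) * N r) :=
        Continuous.add
          (((continuous_id.mul continuous_const).sub continuous_const).mul continuous_const)
          (((continuous_id.mul continuous_const).sub continuous_const).mul continuous_const)
      have htend := (hcont.tendsto δl).comp hδseqtend
      have hge : (0 : ℝ) ≤ (δl * (αl + αh) - αl) * P r
          + (δl * (2 - αl - αh) - (1 - αl)) * N r := ge_of_tendsto' htend hn
      rw [hδlmul, sub_self, zero_mul, zero_add] at hge
      have hcN : δl * (2 - αl - αh) - (1 - αl) < 0 := by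
        rw [div_mul_eq_mul_div, sub_neg, div_lt_iff₀ hsum]; nlinarith
      have hN := hNnonneg r
      have : N r ≤ 0 := by nlinarith
      exact le_antisymm this hN
    · intro r hr
      simp only [mem_iInter]
      exact fun n => hsub (hδseqgt n) hr
  have htendF : Tendsto (fun n => F (δseq n)) atTop (nhds L) := by
    have := tendsto_setIntegral_of_antitone (μ := volume) (f := P)
      (fun n => hSmeas (δseq n)) hanti ⟨0, hPint'.integrableOn⟩
    rw [hiInter] at this
    have heq : (fun n => F (δseq n)) = fun n => ∫ r in S (δseq n), P r := by
      funext n; rw [hF]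
    rw [heq]
    exact this
  -- final tendsto via monotonicity squeeze
  rw [tendsto_order]
  constructor
  · intro b hb
    filter_upwards [self_mem_nhdsWithin] with δ hδ
    exact lt_of_lt_of_le hb (hlow hδ)
  · intro b hb
    obtain ⟨n, hn⟩ := (htendF.eventually (gt_mem_nhds hb)).exists
    filter_upwards [Ioo_mem_nhdsGT_of_mem ⟨le_refl δl, hδseqgt n⟩] with δ hδ
    exact lt_of_le_of_lt (hFmono hδ.2.le) hn
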